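/- For every integer k ≥ 3 with k ≠ 4 and k ≠ 8, if θ ∈ [0, π] satisfies cos(θ) = -1 + cos(6π/(k+2)) - cos(4π/(k+2)) + 2cos(2π/(k+2)), then θ/π is irrational. -/

import Mathlib

open Polynomial

noncomputable def Qpoly (a b : ℕ) : Polynomial ℚ :=
  X ^ (b*2 + a*3) + X ^ (a*3) + 2 * X ^ (b + a*3) - X ^ (b + a*6) - X ^ b
    + X ^ (b + a*5) + X ^ (b + a) - 2 * X ^ (b + a*4) - 2 * X ^ (b + a*2)

lemma quadE (x : ℝ) :
    Complex.exp ((x:ℂ) * Complex.I) ^ 2 + 1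
      = 2 * ((Real.cos x : ℝ) : ℂ) * Complex.exp ((x:ℂ) * Complex.I) := by
  rw [Complex.exp_mul_I, Complex.ofReal_cos x]
  linear_combination (-1 : ℂ) * Complex.sin_sq_add_cos_sq (x:ℂ)
    + (Complex.sin (x:ℂ))^2 * Complex.I_sq

lemma Qval (a b t : ℕ) (γ : ℝ) :
    Polynomial.aeval ((Complex.exp ((γ:ℂ) * Complex.I)) ^ t) (Qpoly a b)
      = (Complex.exp ((γ:ℂ) * Complex.I)) ^ (t * (b + a*3)) *
        (2 * ((Real.cos ((t*b : ℕ) * γ) + 1 - Real.cos ((t*(a*3) : ℕ) * γ)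
          + Real.cos ((t*(a*2) : ℕ) * γ) - 2 * Real.cos ((t*a : ℕ) * γ) : ℝ) : ℂ)) := by
  set ζ : ℂ := Complex.exp ((γ:ℂ) * Complex.I) with hζ
  have hE : ∀ m : ℕ, ζ ^ m = Complex.exp ((((m : ℕ) * γ : ℝ):ℂ) * Complex.I) := by
    intro m
    rw [hζ, ← Complex.exp_nat_mul]
    congr 1
    push_cast
    ring
  have hquad : ∀ m : ℕ, (ζ ^ m) ^ 2 + 1
      = 2 * ((Real.cos ((m:ℕ) * γ) : ℝ) : ℂ) * (ζ ^ m) := by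
    intro m
    rw [hE m]
    exact quadE _
  have expand : Polynomial.aeval (ζ ^ t) (Qpoly a b) =
      (ζ^t)^(b*2+a*3) + (ζ^t)^(a*3) + 2*(ζ^t)^(b+a*3) - (ζ^t)^(b+a*6) - (ζ^t)^b
        + (ζ^t)^(b+a*5) + (ζ^t)^(b+a) - 2*(ζ^t)^(b+a*4) - 2*(ζ^t)^(b+a*2) := by
    simp [Qpoly, map_ofNat]
  rw [expand]
  have hA := hquad (t*b)
  have hB := hquad (t*(a*3))
  have hC := hquad (t*(a*2))
  have hD := hquad (t*a)
  have ew : ζ ^ (t*b) = (ζ^t)^b := by rw [pow_mul]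
  have ez3 : ζ ^ (t*(a*3)) = ((ζ^t)^a)^3 := by rw [pow_mul, pow_mul]
  have ez2 : ζ ^ (t*(a*2)) = ((ζ^t)^a)^2 := by rw [pow_mul, pow_mul]
  have ez : ζ ^ (t*a) = (ζ^t)^a := by rw [pow_mul]
  rw [ew] at hA
  rw [ez3] at hB
  rw [ez2] at hC
  rw [ez] at hD
  have emain : ζ ^ (t * (b + a*3)) = (ζ^t)^b * ((ζ^t)^a)^3 := by
    rw [pow_mul, pow_add, pow_mul]
  rw [emain]
  set w : ℂ := (ζ^t)^b
  set z : ℂ := (ζ^t)^a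
  have e1 : (ζ^t)^(b*2+a*3) = w^2 * z^3 := by rw [pow_add, pow_mul, pow_mul]
  have e2 : (ζ^t)^(a*3) = z^3 := by rw [pow_mul]
  have e3 : (ζ^t)^(b+a*3) = w * z^3 := by rw [pow_add, pow_mul]
  have e4 : (ζ^t)^(b+a*6) = w * z^6 := by rw [pow_add, pow_mul]
  have e5 : (ζ^t)^(b+a*5) = w * z^5 := by rw [pow_add, pow_mul]
  have e6 : (ζ^t)^(b+a) = w * z := by rw [pow_add]
  have e7 : (ζ^t)^(b+a*4) = w * z^4 := by rw [pow_add, pow_mul]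
  have e8 : (ζ^t)^(b+a*2) = w * z^2 := by rw [pow_add, pow_mul]
  rw [e1, e2, e3, e4, e5, e6, e7, e8]
  push_cast [-Complex.ofReal_cos] at hA hB hC hD ⊢
  linear_combination (z^3) * hA - w * hB + (w*z) * hC - 2*(w*z^2) * hD

lemma cop_of_int (r n : ℕ) (x y : ℤ) (h : x*(r:ℤ) + y*(n:ℤ) = 1) : Nat.Coprime r n :=
  Nat.isCoprime_iff_coprime.mp ⟨x, y, h⟩

lemma cos_two_pi_div_seven : (0.61 : ℝ) ≤ Real.cos (2*Real.pi/7) := by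
  have hπ := Real.pi_pos
  set c := Real.cos (2*Real.pi/7) with hc
  have h2 : Real.cos (2*Real.pi - 6*Real.pi/7) = 4*c^3 - 3*c := by
    rw [Real.cos_two_pi_sub, show (6*Real.pi/7 : ℝ) = 3*(2*Real.pi/7) by ring,
      Real.cos_three_mul]
  have h3 : Real.cos (2*Real.pi - 6*Real.pi/7) = 2*(2*c^2-1)^2 - 1 := by
    rw [show (2*Real.pi - 6*Real.pi/7 : ℝ) = 2*(2*(2*Real.pi/7)) by ring,
      Real.cos_two_mul, Real.cos_two_mul]
  have key : 4*c^3 - 3*c = 2*(2*c^2-1)^2 - 1 := h2.symm.trans h3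
  have hlt : c < 1 := by
    have h := Real.cos_lt_cos_of_nonneg_of_le_pi (le_refl (0:ℝ))
      (by linarith : 2*Real.pi/7 ≤ Real.pi) (by linarith : (0:ℝ) < 2*Real.pi/7)
    rwa [Real.cos_zero] at h
  have hpos : 0 < c := Real.cos_pos_of_mem_Ioo ⟨by nlinarith, by nlinarith⟩
  have h4 : (c - 1) * (8*c^3 + 4*c^2 - 4*c - 1) = 0 := by linear_combination -key
  have hcub : 8*c^3 + 4*c^2 - 4*c - 1 = 0 := by
    rcases mul_eq_zero.mp h4 with h | h
    · exfalso; linarith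
    · exact h
  by_contra hlt61
  push_neg at hlt61
  have hquadpos : (0:ℝ) ≤ 8*c^2 + 8.88*c + 1.4168 := by nlinarith [sq_nonneg c]
  nlinarith [mul_nonneg (by linarith : (0:ℝ) ≤ 0.61 - c) hquadpos]

lemma cubic_lt {x : ℝ} (h1 : -1 ≤ x) (h2 : x ≤ -0.61) : 4*x^3 - 2*x^2 - x < -1 := by
  nlinarith [mul_nonneg (by linarith : (0:ℝ) ≤ -0.61 - x)
    (by nlinarith [sq_nonneg (2*x - 1.11)] : (0:ℝ) ≤ 4*x^2 - 4.44*x + 1.7084)]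

lemma exists_r (n : ℕ) (h5 : 5 ≤ n) (h6 : n ≠ 6) (h10 : n ≠ 10) :
    ∃ r : ℕ, r < n ∧ Nat.Coprime r n ∧ ∃ δ : ℝ, 0 ≤ δ ∧ δ ≤ 2*Real.pi/7 ∧
      2*Real.pi*r/n = Real.pi - δ := by
  have hπ := Real.pi_pos
  rcases Nat.even_or_odd n with he | ho
  · -- n even
    obtain ⟨m, hm⟩ : ∃ m, n = 2*m := ⟨n/2, by obtain ⟨c,hc⟩ := he; omega⟩
    rcases Nat.even_or_odd m with hme | hmo
    · -- n = 4j+4 with j ≥ 1, r = 2j+1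
      obtain ⟨j, hj⟩ : ∃ j, n = 4*j+4 := by
        obtain ⟨mm, hmm⟩ := hme; exact ⟨mm - 1, by omega⟩
      refine ⟨2*j+1, by omega, cop_of_int _ _ (-(2*(j:ℤ)+3)) ((j:ℤ)+1) (by push_cast [hj]; ring),
        Real.pi/(2*(j:ℝ)+2), by positivity, ?_, ?_⟩
      · rw [div_le_div_iff₀ (by positivity) (by norm_num)]
        have : (1:ℝ) ≤ (j:ℝ) := by exact_mod_cast (by omega : 1 ≤ j)
        nlinarith
      · subst hj
        have hne : ((4*j+4 : ℕ):ℝ) ≠ 0 := by positivity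
        push_cast at hne ⊢
        field_simp
        ring
    · -- n = 2m, m odd; n ≥ 14, n = 4u+14, r = 2u+5
      obtain ⟨u, hu⟩ : ∃ u, n = 4*u+14 := by
        obtain ⟨s, hs⟩ := hmo; exact ⟨(n-14)/4, by omega⟩
      refine ⟨2*u+5, by omega,
        cop_of_int _ _ (-(2*(u:ℤ)^2+14*(u:ℤ)+25)) (((u:ℤ)+3)^2) (by push_cast [hu]; ring),
        2*Real.pi/(2*(u:ℝ)+7), by positivity, ?_, ?_⟩
      · rw [div_le_div_iff₀ (by positivity) (by norm_num)]
        have : (0:ℝ) ≤ (u:ℝ) := by positivity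
        nlinarith
      · subst hu
        push_cast
        field_simp
        ring
  · -- n odd, n = 2m+1, m ≥ 2, r = m
    obtain ⟨m, hm⟩ : ∃ m, n = 2*m+1 := ho
    refine ⟨m, by omega, cop_of_int _ _ (-2) 1 (by push_cast [hm]; ring),
      Real.pi/(2*(m:ℝ)+1), by positivity, ?_, ?_⟩
    · rw [div_le_div_iff₀ (by positivity) (by norm_num)]
      have : (2:ℝ) ≤ (m:ℝ) := by exact_mod_cast (by omega : 2 ≤ m)
      nlinarith
    · subst hm
      push_cast
      field_simp
      ring

set_option maxHeartbeats 1000000 in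
theorem theta_B_irrational (k : ℤ) (hk : 3 ≤ k) (h4 : k ≠ 4) (h8 : k ≠ 8)
    (θ : ℝ) (h0 : 0 ≤ θ) (h1 : θ ≤ Real.pi)
    (hθ : Real.cos θ = -1 + Real.cos (6 * Real.pi / ((k : ℝ) + 2))
      - Real.cos (4 * Real.pi / ((k : ℝ) + 2))
      + 2 * Real.cos (2 * Real.pi / ((k : ℝ) + 2))) :
    Irrational (θ / Real.pi) := by
  by_contra hirr
  obtain ⟨s, hs⟩ := not_not.mp hirr
  have hπ := Real.pi_pos
  have hθs : θ = (s:ℝ) * Real.pi := by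
    rw [eq_div_iff (ne_of_gt hπ)] at hs
    linarith [hs]
  have hs0 : 0 ≤ s := by
    have h : 0 ≤ (s:ℝ) := by
      by_contra hneg
      push_neg at hneg
      nlinarith
    exact_mod_cast h
  set q : ℕ := s.den with hqdef
  set p : ℕ := s.num.toNat with hpdef
  have hq0 : q ≠ 0 := s.den_ne_zero
  have hsval : (s:ℝ) = (p:ℝ) / (q:ℝ) := by
    have hnum : (p:ℤ) = s.num := by
      rw [hpdef]; exact Int.toNat_of_nonneg (Rat.num_nonneg.mpr hs0)
    have hnum' : (p:ℝ) = (s.num:ℝ) := by exact_mod_cast congrArg (Int.cast : ℤ → ℝ) hnum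
    rw [Rat.cast_def, hnum', hqdef]
  set n : ℕ := (k+2).toNat with hndef
  have hn5 : 5 ≤ n := by omega
  have hnR : (n:ℝ) = (k:ℝ) + 2 := by
    have h : (n:ℤ) = k + 2 := by omega
    exact_mod_cast congrArg (Int.cast : ℤ → ℝ) h
  have hn0 : (n:ℝ) ≠ 0 := by positivity
  have hq0R : (q:ℝ) ≠ 0 := by exact_mod_cast hq0
  set a : ℕ := 2*q with hadef
  set b : ℕ := p*n with hbdef
  set N : ℕ := a*n with hNdef
  set γ : ℝ := 2*Real.pi/(N:ℝ) with hγdef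
  have hN0 : N ≠ 0 := by
    rw [hNdef, hadef]
    exact Nat.mul_ne_zero (Nat.mul_ne_zero two_ne_zero hq0) (by omega)
  have hNR : (N:ℝ) = 2*(q:ℝ)*(n:ℝ) := by rw [hNdef, hadef]; push_cast; ring
  set ζ : ℂ := Complex.exp (2*Real.pi*Complex.I/(N:ℕ)) with hζdef
  have hζγ : ζ = Complex.exp ((γ:ℂ) * Complex.I) := by
    rw [hζdef]
    congr 1
    push_cast [hγdef]
    ring
  have hprim : IsPrimitiveRoot ζ N := Complex.isPrimitiveRoot_exp N hN0
  -- bracket at t = 1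
  have hkey1 := Qval a b 1 γ
  rw [← hζγ, pow_one] at hkey1
  have hA1 : ((1*b : ℕ):ℝ) * γ = θ := by
    rw [hθs, hsval]
    push_cast [hbdef, hγdef, hNR]
    field_simp
  have hB1 : ((1*(a*3) : ℕ):ℝ) * γ = 6 * Real.pi / ((k:ℝ)+2) := by
    rw [← hnR]
    push_cast [hadef, hγdef, hNR]
    field_simp
    ring
  have hC1 : ((1*(a*2) : ℕ):ℝ) * γ = 4 * Real.pi / ((k:ℝ)+2) := by
    rw [← hnR]
    push_cast [hadef, hγdef, hNR]
    field_simp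
    ring
  have hD1 : ((1*a : ℕ):ℝ) * γ = 2 * Real.pi / ((k:ℝ)+2) := by
    rw [← hnR]
    push_cast [hadef, hγdef, hNR]
    field_simp
  rw [hA1, hB1, hC1, hD1] at hkey1
  have hbr1 : (Real.cos θ + 1 - Real.cos (6*Real.pi/((k:ℝ)+2))
      + Real.cos (4*Real.pi/((k:ℝ)+2)) - 2*Real.cos (2*Real.pi/((k:ℝ)+2)) : ℝ) = 0 := by
    linarith [hθ]
  have hQζ : Polynomial.aeval ζ (Qpoly a b) = 0 := by
    rw [hkey1, hbr1]
    simp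
  -- choose r and t
  obtain ⟨r, hrn, hrcop, δ, hδ0, hδ7, hδeq⟩ := exists_r n hn5 (by omega) (by omega)
  have hdvd : n ∣ N := ⟨a, by rw [hNdef]; ring⟩
  haveI : NeZero N := ⟨hN0⟩
  obtain ⟨u, hu⟩ := ZMod.unitsMap_surjective hdvd (ZMod.unitOfCoprime r hrcop)
  set t : ℕ := (u : ZMod N).val with htdef
  have htcop : Nat.Coprime t N := ZMod.val_coe_unit_coprime u
  have htr : (t : ZMod n) = (r : ZMod n) := by
    have h1 : ((t:ℕ) : ZMod n) = ZMod.castHom hdvd (ZMod n) (u : ZMod N) := by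
      rw [htdef, ZMod.natCast_val, ZMod.castHom_apply]
    rw [h1]
    have h2 : ZMod.castHom hdvd (ZMod n) (u : ZMod N)
        = ((ZMod.unitsMap hdvd u : (ZMod n)ˣ) : ZMod n) := rfl
    rw [h2, hu, ZMod.coe_unitOfCoprime]
  have hmod : t % n = r % n := (ZMod.natCast_eq_natCast_iff' t r n).mp htr
  -- conjugate vanishing
  have hQt : Polynomial.aeval (ζ^t) (Qpoly a b) = 0 := by
    have hd2 : minpoly ℚ ζ ∣ Qpoly a b := minpoly.dvd ℚ ζ hQζ
    rw [← Polynomial.cyclotomic_eq_minpoly_rat hprim (Nat.pos_of_ne_zero hN0)] at hd2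
    obtain ⟨R, hR⟩ := hd2
    have hroot : Polynomial.aeval (ζ^t) (Polynomial.cyclotomic N ℚ) = 0 := by
      rw [Polynomial.aeval_def, ← Polynomial.eval_map, Polynomial.map_cyclotomic]
      exact (hprim.pow_of_coprime t htcop).isRoot_cyclotomic (Nat.pos_of_ne_zero hN0)
    rw [hR, map_mul, hroot, zero_mul]
  -- extract bracket at t
  have hkt := Qval a b t γ
  rw [← hζγ, hQt] at hkt
  have hbrt : (Real.cos ((t*b : ℕ) * γ) + 1 - Real.cos ((t*(a*3) : ℕ) * γ)
      + Real.cos ((t*(a*2) : ℕ) * γ) - 2 * Real.cos ((t*a : ℕ) * γ) : ℝ) = 0 := by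
    have h1 : ζ ^ (t*(b+a*3)) ≠ 0 := pow_ne_zero _ (by rw [hζγ]; exact Complex.exp_ne_zero _)
    rcases mul_eq_zero.mp hkt.symm with h | h
    · exact absurd h h1
    · have h2 : (2:ℝ) * (Real.cos ((t*b : ℕ) * γ) + 1 - Real.cos ((t*(a*3) : ℕ) * γ)
          + Real.cos ((t*(a*2) : ℕ) * γ) - 2 * Real.cos ((t*a : ℕ) * γ)) = 0 := by
        field_simp at h
        norm_cast at h
        rw [mul_comm γ, mul_comm γ, mul_comm γ] at h
        exact h
      linarith
  -- rewrite arguments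
  have hv3 : ((t*(a*3) : ℕ):ℝ) * γ = 3*(2*Real.pi*(t:ℝ)/(n:ℝ)) := by
    push_cast [hadef, hγdef, hNR]
    field_simp
  have hv2 : ((t*(a*2) : ℕ):ℝ) * γ = 2*(2*Real.pi*(t:ℝ)/(n:ℝ)) := by
    push_cast [hadef, hγdef, hNR]
    field_simp
  have hv1 : ((t*a : ℕ):ℝ) * γ = 2*Real.pi*(t:ℝ)/(n:ℝ) := by
    push_cast [hadef, hγdef, hNR]
    field_simp
  rw [hv3, hv2, hv1, Real.cos_three_mul, Real.cos_two_mul] at hbrt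
  -- periodicity: cos(2πt/n) = cos(2πr/n)
  have hper : Real.cos (2*Real.pi*(t:ℝ)/(n:ℝ)) = Real.cos (2*Real.pi*(r:ℝ)/(n:ℝ)) := by
    have ht' : t % n = r := by rw [hmod, Nat.mod_eq_of_lt hrn]
    obtain ⟨d, hd⟩ : ∃ d, t = n*d + r :=
      ⟨t/n, by conv_lhs => rw [← Nat.div_add_mod t n, ht']⟩
    have harg : 2*Real.pi*(t:ℝ)/(n:ℝ) = 2*Real.pi*(r:ℝ)/(n:ℝ) + (d:ℝ)*(2*Real.pi) := by
      rw [hd]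
      push_cast
      field_simp
      ring
    rw [harg, Real.cos_add_nat_mul_two_pi]
  have hcosr : Real.cos (2*Real.pi*(r:ℝ)/(n:ℝ)) ≤ -0.61 := by
    rw [hδeq, Real.cos_pi_sub]
    have hmono := Real.cos_le_cos_of_nonneg_of_le_pi hδ0 (by linarith : 2*Real.pi/7 ≤ Real.pi) hδ7
    have h7 := cos_two_pi_div_seven
    linarith
  set X : ℝ := Real.cos (2*Real.pi*(t:ℝ)/(n:ℝ)) with hXdef
  have hX61 : X ≤ -0.61 := hper.trans_le hcosr
  have hX1 : -1 ≤ X := Real.neg_one_le_cos _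
  have hCge : -1 ≤ Real.cos ((t*b : ℕ) * γ) := Real.neg_one_le_cos _
  have hfin := cubic_lt hX1 hX61
  nlinarith [hbrt, hfin, hCge]
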